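/- Let f : ℝ^d → ℝ be differentiable with L-Lipschitz gradient, let λ ≥ 0 and let η > 0 satisfy ηL ≤ 1. Let u_t and w_t be two proximal gradient sequences u_{t+1} = S_{ηλ}(u_t − η∇f(u_t)) and w_{t+1} = S_{ηλ}(w_t − η∇f(w_t)). Then for every step, ‖w_{t+1} − u_{t+1}‖ ≥ (1 − ηL)‖w_t − u_t‖ − 2ηλ√d, and consequently for every t ≥ 1, ‖w_t − u_t‖ ≥ (1 − ηL)^t · ‖w₀ − u₀‖ − 2ηλ√d · Σ_{i=0}^{t−1} (1 − ηL)^i. In particular, if λ is small enough that (1 − ηL)^T ‖w₀ − u₀‖ > 2λ√d/L for a given horizon T, then ‖w_t − u_t‖ > 0 for all t ≤ T. -/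

import Mathlib

/-- Soft-thresholding operator `S_c` on `ℝ^d`, defined componentwise by
`(S_c x)_i = sign(x_i) * max (|x_i| - c) 0`. -/
noncomputable def soft {d : ℕ} (c : ℝ) (x : EuclideanSpace ℝ (Fin d)) :
    EuclideanSpace ℝ (Fin d) :=
  WithLp.toLp 2 (fun i => Real.sign (x i) * max (|x i| - c) 0)

lemma real_sign_mul_abs (x : ℝ) : Real.sign x * |x| = x := by
  rcases lt_trichotomy x 0 with h | h | h
  · rw [Real.sign_of_neg h, abs_of_neg h]; ring
  · simp [h]
  · rw [Real.sign_of_pos h, abs_of_pos h]; ring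

lemma soft_close {d : ℕ} {c : ℝ} (hc : 0 ≤ c) (x : EuclideanSpace ℝ (Fin d)) :
    ‖soft c x - x‖ ≤ Real.sqrt d * c := by
  have hcomp : ∀ i, |soft c x i - x i| ≤ c := by
    intro i
    have hs : soft c x i - x i = Real.sign (x i) * (max (|x i| - c) 0 - |x i|) := by
      rw [mul_sub, real_sign_mul_abs]; rfl
    have h1 : |Real.sign (x i)| ≤ 1 := by
      rcases Real.sign_apply_eq (x i) with h | h | h <;> simp [h]
    have hub : max (|x i| - c) 0 ≤ |x i| := max_le (by linarith) (abs_nonneg _)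
    have hlb : |x i| - c ≤ max (|x i| - c) 0 := le_max_left _ _
    have h2 : abs (max (|x i| - c) 0 - |x i|) ≤ c := by
      rw [abs_le]; constructor <;> linarith
    calc |soft c x i - x i| = |Real.sign (x i)| * abs (max (|x i| - c) 0 - |x i|) := by
          rw [hs, abs_mul]
      _ ≤ 1 * c := mul_le_mul h1 h2 (abs_nonneg _) zero_le_one
      _ = c := one_mul c
  rw [EuclideanSpace.norm_eq]
  have hsum : ∑ i, ‖(soft c x - x) i‖ ^ 2 ≤ ∑ _i : Fin d, c ^ 2 := by
    apply Finset.sum_le_sum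
    intro i _
    have := hcomp i
    have h' : ‖(soft c x - x) i‖ = |soft c x i - x i| := by
      rw [PiLp.sub_apply]; rfl
    rw [h']
    nlinarith [abs_nonneg (soft c x i - x i)]
  calc Real.sqrt (∑ i, ‖(soft c x - x) i‖ ^ 2) ≤ Real.sqrt (∑ _i : Fin d, c ^ 2) :=
        Real.sqrt_le_sqrt hsum
    _ = Real.sqrt (d * c ^ 2) := by rw [Finset.sum_const, Finset.card_univ, Fintype.card_fin,
        nsmul_eq_mul]
    _ = Real.sqrt d * c := by
        rw [Real.sqrt_mul (by positivity), Real.sqrt_sq hc]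

/-- Two coupled proximal gradient sequences separate at most geometrically: per-step lower
bound, iterated lower bound, and positivity of the separation for small `λ`. -/
theorem coupled_sequences_lower_bound (d : ℕ) (hd : 1 ≤ d)
    (f : EuclideanSpace ℝ (Fin d) → ℝ) (L : ℝ)
    (hdiff : Differentiable ℝ f)
    (hlip : ∀ x y : EuclideanSpace ℝ (Fin d), ‖gradient f x - gradient f y‖ ≤ L * ‖x - y‖)
    (lam η : ℝ) (hlam : 0 ≤ lam) (hη : 0 < η) (hηL : η * L ≤ 1)
    (u w : ℕ → EuclideanSpace ℝ (Fin d))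
    (hu : ∀ t, u (t + 1) = soft (η * lam) (u t - η • gradient f (u t)))
    (hw : ∀ t, w (t + 1) = soft (η * lam) (w t - η • gradient f (w t))) :
    (∀ t, (1 - η * L) * ‖w t - u t‖ - 2 * η * lam * Real.sqrt d ≤ ‖w (t + 1) - u (t + 1)‖) ∧
    (∀ t : ℕ, 1 ≤ t →
      (1 - η * L) ^ t * ‖w 0 - u 0‖ -
          2 * η * lam * Real.sqrt d * ∑ i ∈ Finset.range t, (1 - η * L) ^ i ≤
        ‖w t - u t‖) ∧
    (0 < L → ∀ T : ℕ,
      2 * lam * Real.sqrt d / L < (1 - η * L) ^ T * ‖w 0 - u 0‖ →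
      ∀ t ≤ T, 0 < ‖w t - u t‖) := by
  have hsd : (0:ℝ) ≤ Real.sqrt d := Real.sqrt_nonneg _
  have hc : 0 ≤ η * lam := mul_nonneg hη.le hlam
  -- Part 1: per-step bound
  have step : ∀ t, (1 - η * L) * ‖w t - u t‖ - 2 * η * lam * Real.sqrt d ≤
      ‖w (t + 1) - u (t + 1)‖ := by
    intro t
    set gu := u t - η • gradient f (u t) with hgu
    set gw := w t - η • gradient f (w t) with hgw
    have h1 : ‖soft (η * lam) gu - gu‖ ≤ Real.sqrt d * (η * lam) := soft_close hc gu
    have h2 : ‖soft (η * lam) gw - gw‖ ≤ Real.sqrt d * (η * lam) := soft_close hc gw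
    have h3 : (1 - η * L) * ‖w t - u t‖ ≤ ‖gw - gu‖ := by
      have heq : gw - gu = (w t - u t) - η • (gradient f (w t) - gradient f (u t)) := by
        rw [hgu, hgw, smul_sub]; abel
      have hg : ‖η • (gradient f (w t) - gradient f (u t))‖ ≤ η * L * ‖w t - u t‖ := by
        rw [norm_smul, Real.norm_eq_abs, abs_of_pos hη, mul_assoc]
        exact mul_le_mul_of_nonneg_left (hlip _ _) hη.le
      have := norm_sub_norm_le (w t - u t) (η • (gradient f (w t) - gradient f (u t)))
      rw [heq]
      linarith
    have h4 : ‖gw - gu‖ ≤ ‖soft (η * lam) gw - soft (η * lam) gu‖ +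
        (‖soft (η * lam) gw - gw‖ + ‖soft (η * lam) gu - gu‖) := by
      have heq : gw - gu = (soft (η * lam) gw - soft (η * lam) gu) -
          (soft (η * lam) gw - gw) + (soft (η * lam) gu - gu) := by abel
      calc ‖gw - gu‖ = ‖(soft (η * lam) gw - soft (η * lam) gu) -
            (soft (η * lam) gw - gw) + (soft (η * lam) gu - gu)‖ := by rw [← heq]
        _ ≤ ‖(soft (η * lam) gw - soft (η * lam) gu) - (soft (η * lam) gw - gw)‖ +
            ‖soft (η * lam) gu - gu‖ := norm_add_le _ _
        _ ≤ ‖soft (η * lam) gw - soft (η * lam) gu‖ + ‖soft (η * lam) gw - gw‖ +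
            ‖soft (η * lam) gu - gu‖ := by
              have := norm_sub_le (soft (η * lam) gw - soft (η * lam) gu)
                (soft (η * lam) gw - gw)
              linarith
        _ = _ := by ring
    rw [hu t, hw t, ← hgu, ← hgw]
    linarith
  -- Part 2: iterated bound (holds for all t)
  have part2 : ∀ t : ℕ, (1 - η * L) ^ t * ‖w 0 - u 0‖ -
      2 * η * lam * Real.sqrt d * ∑ i ∈ Finset.range t, (1 - η * L) ^ i ≤ ‖w t - u t‖ := by
    intro t
    induction t with
    | zero => simp
    | succ t ih =>
      have ha : 0 ≤ 1 - η * L := by linarith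
      have hsum : ∑ i ∈ Finset.range (t + 1), (1 - η * L) ^ i =
          (1 - η * L) * ∑ i ∈ Finset.range t, (1 - η * L) ^ i + 1 := geom_sum_succ
      calc (1 - η * L) ^ (t + 1) * ‖w 0 - u 0‖ -
            2 * η * lam * Real.sqrt d * ∑ i ∈ Finset.range (t + 1), (1 - η * L) ^ i
          = (1 - η * L) * ((1 - η * L) ^ t * ‖w 0 - u 0‖ -
              2 * η * lam * Real.sqrt d * ∑ i ∈ Finset.range t, (1 - η * L) ^ i) -
              2 * η * lam * Real.sqrt d := by rw [hsum]; ring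
        _ ≤ (1 - η * L) * ‖w t - u t‖ - 2 * η * lam * Real.sqrt d := by
            nlinarith [mul_le_mul_of_nonneg_left ih ha]
        _ ≤ ‖w (t + 1) - u (t + 1)‖ := step t
  refine ⟨step, ?_, ?_⟩
  · exact fun t _ => part2 t
  -- Part 3
  · intro hL T hT t ht
    have ha0 : 0 ≤ 1 - η * L := by linarith
    have ha1 : 1 - η * L < 1 := by nlinarith
    have hpow : (1 - η * L) ^ T ≤ (1 - η * L) ^ t :=
      pow_le_pow_of_le_one ha0 (by linarith) ht
    have hηL0 : 0 < η * L := mul_pos hη hL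
    -- geometric sum bound
    have hgs : (∑ i ∈ Finset.range t, (1 - η * L) ^ i) * (η * L) ≤ 1 := by
      have := geom_sum_mul (1 - η * L) t
      nlinarith [pow_nonneg ha0 t]
    have hsum_nonneg : 0 ≤ ∑ i ∈ Finset.range t, (1 - η * L) ^ i :=
      Finset.sum_nonneg fun i _ => pow_nonneg ha0 i
    have hb : 2 * η * lam * Real.sqrt d * ∑ i ∈ Finset.range t, (1 - η * L) ^ i ≤
        2 * lam * Real.sqrt d / L := by
      have h' : 2 * lam * Real.sqrt d * ((∑ i ∈ Finset.range t, (1 - η * L) ^ i) * (η * L)) ≤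
          2 * lam * Real.sqrt d * 1 :=
        mul_le_mul_of_nonneg_left hgs (by positivity)
      rw [le_div_iff₀ hL]
      nlinarith
    have hmono : (1 - η * L) ^ T * ‖w 0 - u 0‖ ≤ (1 - η * L) ^ t * ‖w 0 - u 0‖ :=
      mul_le_mul_of_nonneg_right hpow (norm_nonneg _)
    have := part2 t
    linarith
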